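/- Let t ∈ [0,1) and m ∈ ℕ₀. Then the sequence x^{[m]} belongs to d₁, that is, x^{[m]} is bounded and its least decreasing majorant is summable: the series ∑_{n=0}^∞ sup_{k≥n} |x^{[m]}_k| = ∑_{n=0}^∞ sup_{k≥max(n,m)} C(k,m) t^{k−m} converges. -/

import Mathlib

/-- The eigenvector `x^{[m]}`: `x^{[m]}_n = 0` for `n < m` and
`x^{[m]}_n = C(n,m) t^{n-m}` for `n ≥ m`. -/
noncomputable def eigvec (t : ℝ) (m : ℕ) : ℕ → ℂ :=
  fun n => if n < m then 0 else (Nat.choose n m : ℂ) * (t : ℂ) ^ (n - m)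

/-- Let `t ∈ [0,1)` and `m ∈ ℕ`. Then `x^{[m]}` belongs to `d₁`: it is a bounded
sequence and its least decreasing majorant `(sup_{k ≥ n} |x^{[m]}_k|)ₙ` is summable. -/
theorem eigvec_mem_d1 (t : ℝ) (ht : t ∈ Set.Ico (0 : ℝ) 1) (m : ℕ) :
    (∃ M : ℝ, ∀ k, ‖eigvec t m k‖ ≤ M) ∧
    Summable (fun n : ℕ => ⨆ k : {k : ℕ // n ≤ k}, ‖eigvec t m k‖) := by
  obtain ⟨ht0, ht1⟩ := ht
  set r : ℝ := (1 + t) / 2 with hr_def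
  have hr0 : 0 < r := by positivity
  have hr1 : r < 1 := by rw [hr_def]; linarith
  have htr : t < r := by rw [hr_def]; linarith
  set s : ℝ := t / r with hs_def
  have hs0 : 0 ≤ s := div_nonneg ht0 hr0.le
  have hs1 : s < 1 := (div_lt_one hr0).mpr htr
  have hts : t = s * r := by rw [hs_def]; field_simp
  -- the auxiliary sequence `g j = C(j+m, m) s^j` is bounded
  set g : ℕ → ℝ := fun j => ((j + m).choose m : ℝ) * s ^ j with hg_def
  have hgsum : Summable g := by
    apply summable_choose_mul_geometric_of_norm_lt_one m
    rwa [Real.norm_eq_abs, abs_of_nonneg hs0]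
  have hbdd : BddAbove (Set.range g) := hgsum.tendsto_atTop_zero.bddAbove_range
  obtain ⟨B, hB⟩ := hbdd
  have hB' : ∀ j, g j ≤ B := fun j => hB (Set.mem_range_self j)
  have hB1 : (1 : ℝ) ≤ B := by
    have := hB' 0
    simpa [hg_def] using this
  set C : ℝ := B / r ^ m with hC_def
  have hC0 : 0 < C := by positivity
  -- key bound: `|x_k| ≤ C r^k`
  have key : ∀ k, ‖eigvec t m k‖ ≤ C * r ^ k := by
    intro k
    unfold eigvec
    by_cases hk : k < m
    · simp only [hk, if_true, norm_zero]
      positivity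
    · simp only [hk, if_false]
      push_neg at hk
      rw [norm_mul, norm_pow]
      rw [Complex.norm_natCast, Complex.norm_real, Real.norm_eq_abs, abs_of_nonneg ht0]
      have h1 : (k.choose m : ℝ) * t ^ (k - m) = g (k - m) * r ^ (k - m) := by
        simp only [hg_def, Nat.sub_add_cancel hk]
        rw [hts, mul_pow]; ring
      rw [h1]
      have h2 : g (k - m) * r ^ (k - m) ≤ B * r ^ (k - m) :=
        mul_le_mul_of_nonneg_right (hB' _) (by positivity)
      refine h2.trans ?_
      have h3 : C * r ^ k = B * r ^ (k - m) := by
        rw [hC_def]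
        have : r ^ k = r ^ (k - m) * r ^ m := by
          rw [← pow_add, Nat.sub_add_cancel hk]
        rw [this, mul_comm (r ^ (k - m)) (r ^ m), ← mul_assoc,
          div_mul_cancel₀ B (pow_ne_zero m hr0.ne')]
      rw [h3]
  constructor
  · exact ⟨C, fun k => (key k).trans (by
      have : r ^ k ≤ 1 := pow_le_one₀ hr0.le hr1.le
      nlinarith)⟩
  · have hbound : ∀ n : ℕ, (⨆ k : {k : ℕ // n ≤ k}, ‖eigvec t m k‖) ≤ C * r ^ n := by
      intro n
      have : Nonempty {k : ℕ // n ≤ k} := ⟨⟨n, le_rfl⟩⟩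
      apply ciSup_le
      intro ⟨k, hk⟩
      refine (key k).trans ?_
      exact mul_le_mul_of_nonneg_left (pow_le_pow_of_le_one hr0.le hr1.le hk) hC0.le
    apply Summable.of_nonneg_of_le _ hbound
    · exact (summable_geometric_of_lt_one hr0.le hr1).mul_left C
    · intro n
      have hne : Nonempty {k : ℕ // n ≤ k} := ⟨⟨n, le_rfl⟩⟩
      have hbd : BddAbove (Set.range fun k : {k : ℕ // n ≤ k} => ‖eigvec t m k‖) := by
        refine ⟨C * r ^ n, ?_⟩
        rintro x ⟨⟨k, hk⟩, rfl⟩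
        exact (key k).trans
          (mul_le_mul_of_nonneg_left (pow_le_pow_of_le_one hr0.le hr1.le hk) hC0.le)
      calc (0 : ℝ) ≤ ‖eigvec t m n‖ := norm_nonneg _
        _ ≤ _ := le_ciSup hbd ⟨n, le_rfl⟩
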